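/- For any finite simple graph G, at least one of the following holds: (1) χ(G) ≤ (ω(G) + Δ(G) + 1)/2, or (2) χ(G) ≤ (ω(G)/2 + |G| − α(G))/2 + 1. -/

import Mathlib

open Finset

variable {V : Type*} [Fintype V] [DecidableEq V]

/-- A (proper) coloring of `G`: a partition of the vertex set into nonempty independent sets. -/
def IsColoring (G : SimpleGraph V) (C : Finset (Finset V)) : Prop :=
  (∀ I ∈ C, I.Nonempty) ∧
  (∀ v : V, ∃! I, I ∈ C ∧ v ∈ I) ∧
  (∀ I ∈ C, ∀ v ∈ I, ∀ w ∈ I, ¬ G.Adj v w)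

/-- The frame of a coloring: the multiset of the orders of its color classes. -/
def Frame (C : Finset (Finset V)) : Multiset ℕ :=
  C.val.map Finset.card

/-- The directed edge `(v, w)` is `C`-lonely: `w` lies in a color class `I` not containing `v`
and `N(v) ∩ I = {w}`. -/
def Lonely (G : SimpleGraph V) (C : Finset (Finset V)) (v w : V) : Prop :=
  ∃ I ∈ C, v ∉ I ∧ w ∈ I ∧ ∀ x ∈ I, (G.Adj v x ↔ x = w)

/-- The chromatic number: the minimum number of color classes in a proper coloring. -/
noncomputable def chi (G : SimpleGraph V) : ℕ :=
  sInf {n | ∃ C : Finset (Finset V), IsColoring G C ∧ C.card = n}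

/-- An optimal coloring: a proper coloring with `χ(G)` color classes. -/
def IsOptimalColoring (G : SimpleGraph V) (C : Finset (Finset V)) : Prop :=
  IsColoring G C ∧ C.card = chi G

/-- A (directed) path in the `C`-lonely graph `L_C(G)`, as a nonempty duplicate-free list of
vertices whose consecutive pairs are `C`-lonely edges. -/
def IsLonelyPath (G : SimpleGraph V) (C : Finset (Finset V)) (p : List V) : Prop :=
  p ≠ [] ∧ p.Nodup ∧ List.Chain' (Lonely G C) p

/-- The stinginess `ι(G)`: the maximum number of singleton color classes appearing in an
optimal coloring of `G`. -/
noncomputable def stinginess (G : SimpleGraph V) : ℕ :=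
  sSup {n | ∃ C : Finset (Finset V), IsOptimalColoring G C ∧
    (C.filter fun I => I.card = 1).card = n}

/-- The independence number `α(G)`. -/
noncomputable def indepNum (G : SimpleGraph V) : ℕ :=
  sSup {n | ∃ s : Finset V, (∀ v ∈ s, ∀ w ∈ s, ¬ G.Adj v w) ∧ s.card = n}

/-- An `r`-bounded coloring has all color classes of order at most `r`. -/
def RBounded (r : ℕ) (C : Finset (Finset V)) : Prop :=
  ∀ I ∈ C, I.card ≤ r

/-- `χ_r(G)`: the minimum number of color classes in an `r`-bounded coloring of `G`. -/
noncomputable def chiR (G : SimpleGraph V) (r : ℕ) : ℕ :=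
  sInf {n | ∃ C : Finset (Finset V), IsColoring G C ∧ RBounded r C ∧ C.card = n}

/-- An optimal `r`-bounded coloring. -/
def IsOptimalRBounded (G : SimpleGraph V) (r : ℕ) (C : Finset (Finset V)) : Prop :=
  IsColoring G C ∧ RBounded r C ∧ C.card = chiR G r

/-- `M_r(G)`: the maximum number of order-`r` color classes in an optimal `r`-bounded
coloring of `G`. -/
noncomputable def Mr (G : SimpleGraph V) (r : ℕ) : ℕ :=
  sSup {n | ∃ C : Finset (Finset V), IsOptimalRBounded G r C ∧
    (C.filter fun I => I.card = r).card = n}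

/-- The `r`-bounded stinginess `ι_r(G)`: the maximum number of singleton color classes in an
optimal `r`-bounded coloring of `G`. -/
noncomputable def stinginessR (G : SimpleGraph V) (r : ℕ) : ℕ :=
  sSup {n | ∃ C : Finset (Finset V), IsOptimalRBounded G r C ∧
    (C.filter fun I => I.card = 1).card = n}

/-- `P` is a frame property: membership in `P` only depends on the frame. -/
def IsFrameProperty (G : SimpleGraph V) (P : Finset (Finset V) → Prop) : Prop :=
  ∀ C C' : Finset (Finset V), IsColoring G C → IsColoring G C' →
    Frame C = Frame C' → P C → P C'

/-- `P` is singleton-friendly: `P` is preserved by merging two singleton color classes. -/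
def IsSingletonFriendly (G : SimpleGraph V) (P : Finset (Finset V) → Prop) : Prop :=
  ∀ C : Finset (Finset V), IsColoring G C → ∀ a b : V, a ≠ b → ¬ G.Adj a b →
    ({a} : Finset V) ∈ C → ({b} : Finset V) ∈ C → P C →
      P (insert ({a, b} : Finset V) ((C.erase {a}).erase {b}))

/-- A `P`-optimal coloring: a coloring satisfying `P` with the minimum number of color classes
among colorings satisfying `P`. -/
def IsPOptimal (G : SimpleGraph V) (P : Finset (Finset V) → Prop)
    (C : Finset (Finset V)) : Prop :=
  IsColoring G C ∧ P C ∧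
    ∀ C' : Finset (Finset V), IsColoring G C' → P C' → C.card ≤ C'.card

/-- `Frame_m(C)`: the entries of the frame of `C` that are at least `m`. -/
def FrameGe (m : ℕ) (C : Finset (Finset V)) : Multiset ℕ :=
  (Frame C).filter (fun k => m ≤ k)

/-- The matching number `ν(G)`: the maximum number of edges in a matching of `G`. -/
noncomputable def matchingNumber (G : SimpleGraph V) : ℕ :=
  sSup {n | ∃ M : G.Subgraph, M.IsMatching ∧ M.edgeSet.ncard = n}
set_option linter.unusedSectionVars false

section Helpers

variable {G : SimpleGraph V} {C : Finset (Finset V)} {I J : Finset V} {v w : V}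

lemma class_eq (hC : IsColoring G C) (hI : I ∈ C) (hJ : J ∈ C) (hvI : v ∈ I) (hvJ : v ∈ J) :
    I = J := by
  obtain ⟨K, hK, huniq⟩ := hC.2.1 v
  rw [huniq I ⟨hI, hvI⟩, huniq J ⟨hJ, hvJ⟩]

lemma class_exists (hC : IsColoring G C) (v : V) : ∃ I ∈ C, v ∈ I := by
  obtain ⟨K, ⟨hK, hv⟩, _⟩ := hC.2.1 v
  exact ⟨K, hK, hv⟩

lemma class_disj (hC : IsColoring G C) (hI : I ∈ C) (hJ : J ∈ C) (hIJ : I ≠ J) :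
    Disjoint I J := by
  rw [Finset.disjoint_left]
  intro a haI haJ
  exact hIJ (class_eq hC hI hJ haI haJ)

lemma isColoring_mk (h1 : ∀ I ∈ C, I.Nonempty) (h2 : ∀ v : V, ∃ I ∈ C, v ∈ I)
    (h3 : ∀ I ∈ C, ∀ J ∈ C, I ≠ J → Disjoint I J)
    (h4 : ∀ I ∈ C, ∀ v ∈ I, ∀ w ∈ I, ¬ G.Adj v w) : IsColoring G C := by
  refine ⟨h1, fun v => ?_, h4⟩
  obtain ⟨I, hI, hvI⟩ := h2 v
  refine ⟨I, ⟨hI, hvI⟩, ?_⟩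
  rintro J ⟨hJ, hvJ⟩
  by_contra hne
  exact (Finset.disjoint_left.mp (h3 J hJ I hI hne) hvJ) hvI

lemma chi_le (hC : IsColoring G C) : chi G ≤ C.card :=
  Nat.sInf_le ⟨C, hC, rfl⟩

lemma singleton_coloring (G : SimpleGraph V) :
    IsColoring G ((Finset.univ : Finset V).image fun v => ({v} : Finset V)) := by
  refine isColoring_mk ?_ ?_ ?_ ?_
  · intro I hI
    simp only [Finset.mem_image] at hI
    obtain ⟨v, _, rfl⟩ := hI
    exact ⟨v, Finset.mem_singleton_self v⟩
  · intro v
    exact ⟨{v}, Finset.mem_image_of_mem _ (Finset.mem_univ v), Finset.mem_singleton_self v⟩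
  · intro I hI J hJ hne
    simp only [Finset.mem_image] at hI hJ
    obtain ⟨a, _, rfl⟩ := hI; obtain ⟨b, _, rfl⟩ := hJ
    simp only [Finset.disjoint_singleton_right, Finset.mem_singleton]
    exact fun h => hne (by rw [h])
  · intro I hI
    simp only [Finset.mem_image] at hI
    obtain ⟨a, _, rfl⟩ := hI
    intro x hx y hy
    simp only [Finset.mem_singleton] at hx hy
    subst hx; subst hy
    exact G.loopless.irrefl _

lemma exists_optimal (G : SimpleGraph V) : ∃ C, IsColoring G C ∧ C.card = chi G := by
  have : chi G ∈ {n | ∃ C : Finset (Finset V), IsColoring G C ∧ C.card = n} :=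
    Nat.sInf_mem ⟨_, _, singleton_coloring G, rfl⟩
  exact this

end Helpers
section Merge

set_option linter.unusedSectionVars false

variable {G : SimpleGraph V} {C : Finset (Finset V)} {I J : Finset V} {v w : V}

lemma merge_coloring (hC : IsColoring G C) (hI : I ∈ C) (hJ : J ∈ C) (hIJ : I ≠ J)
    (hind : ∀ x ∈ I ∪ J, ∀ y ∈ I ∪ J, ¬ G.Adj x y) :
    ∃ C' : Finset (Finset V), IsColoring G C' ∧ C'.card + 1 = C.card ∧
      ∀ K ∈ C, K ≠ I → K ≠ J → K ∈ C' := by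
  classical
  set C' := insert (I ∪ J) ((C.erase I).erase J) with hC'def
  have hmem : ∀ K, K ∈ C' ↔ K = I ∪ J ∨ (K ∈ C ∧ K ≠ J ∧ K ≠ I) := by
    intro K
    simp only [hC'def, Finset.mem_insert, Finset.mem_erase]
    tauto
  have hIne : I.Nonempty := hC.1 I hI
  have hUnotold : ∀ K ∈ C, K ≠ I → K ≠ J → K ≠ I ∪ J := by
    intro K hK hKI hKJ heq
    obtain ⟨a, ha⟩ := hIne
    have haK : a ∈ K := heq ▸ Finset.mem_union_left J ha
    exact Finset.disjoint_right.mp (class_disj hC hK hI hKI) ha haK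
  have hcol : IsColoring G C' := by
    refine isColoring_mk ?_ ?_ ?_ ?_
    · intro K hK
      rcases (hmem K).mp hK with rfl | ⟨hK, -, -⟩
      · obtain ⟨a, ha⟩ := hIne; exact ⟨a, Finset.mem_union_left J ha⟩
      · exact hC.1 K hK
    · intro x
      obtain ⟨K, hK, hxK⟩ := class_exists hC x
      by_cases hKI : K = I
      · exact ⟨I ∪ J, (hmem _).mpr (Or.inl rfl), Finset.mem_union_left J (hKI ▸ hxK)⟩
      by_cases hKJ : K = J
      · exact ⟨I ∪ J, (hmem _).mpr (Or.inl rfl), Finset.mem_union_right I (hKJ ▸ hxK)⟩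
      · exact ⟨K, (hmem _).mpr (Or.inr ⟨hK, hKJ, hKI⟩), hxK⟩
    · intro K hK L hL hne
      rcases (hmem K).mp hK with rfl | ⟨hK, hKJ, hKI⟩
      · rcases (hmem L).mp hL with rfl | ⟨hL, hLJ, hLI⟩
        · exact absurd rfl hne
        · rw [Finset.disjoint_union_left]
          exact ⟨(class_disj hC hL hI hLI).symm, (class_disj hC hL hJ hLJ).symm⟩
      · rcases (hmem L).mp hL with rfl | ⟨hL, hLJ, hLI⟩
        · rw [Finset.disjoint_union_right]
          exact ⟨class_disj hC hK hI hKI, class_disj hC hK hJ hKJ⟩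
        · exact class_disj hC hK hL hne
    · intro K hK
      rcases (hmem K).mp hK with rfl | ⟨hK, -, -⟩
      · exact hind
      · exact hC.2.2 K hK
  have hJI : J ∈ C.erase I := Finset.mem_erase.mpr ⟨fun h => hIJ h.symm, hJ⟩
  have hUnm : I ∪ J ∉ (C.erase I).erase J := by
    intro hmem'
    have h1 := Finset.mem_erase.mp hmem'
    have h2 := Finset.mem_erase.mp h1.2
    exact hUnotold _ h2.2 h2.1 h1.1 rfl
  have hcard1 : C'.card = ((C.erase I).erase J).card + 1 := Finset.card_insert_of_notMem hUnm
  have hcard2 : ((C.erase I).erase J).card = (C.erase I).card - 1 := Finset.card_erase_of_mem hJI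
  have hcard3 : (C.erase I).card = C.card - 1 := Finset.card_erase_of_mem hI
  have hge : 1 ≤ (C.erase I).card := Finset.card_pos.mpr ⟨J, hJI⟩
  have hge2 : 1 ≤ C.card := Finset.card_pos.mpr ⟨I, hI⟩
  refine ⟨C', hcol, by omega, fun K hK h1 h2 => (hmem K).mpr (Or.inr ⟨hK, h2, h1⟩)⟩

lemma move_coloring (hC : IsColoring G C) (hv : ({v} : Finset V) ∈ C) (hI : I ∈ C)
    (h2 : 2 ≤ I.card) (hnadj : ∀ x ∈ I, ¬ G.Adj v x) :
    ∃ C' : Finset (Finset V), IsColoring G C' ∧ C'.card + 1 = C.card ∧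
      ∀ K ∈ C, K ≠ {v} → K ≠ I → K ∈ C' := by
  have hne : ({v} : Finset V) ≠ I := by
    intro h; rw [← h] at h2; simp at h2
  have hind : ∀ x ∈ ({v} : Finset V) ∪ I, ∀ y ∈ ({v} : Finset V) ∪ I, ¬ G.Adj x y := by
    intro x hx y hy
    rcases Finset.mem_union.mp hx with hx1 | hx1 <;> rcases Finset.mem_union.mp hy with hy1 | hy1
    · rw [Finset.mem_singleton] at hx1 hy1; rw [hx1, hy1]; exact G.loopless.irrefl _
    · rw [Finset.mem_singleton] at hx1; rw [hx1]; exact hnadj y hy1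
    · rw [Finset.mem_singleton] at hy1; rw [hy1]
      intro h; exact hnadj x hx1 h.symm
    · exact hC.2.2 I hI x hx1 y hy1
  obtain ⟨C', h1', h2', h4'⟩ := merge_coloring hC hv hI hne hind
  exact ⟨C', h1', h2', h4'⟩

end Merge
section Swap

set_option linter.unusedSectionVars false

variable {G : SimpleGraph V} [DecidableRel G.Adj] {C : Finset (Finset V)} {I J : Finset V} {v w : V}

lemma swap_coloring (hC : IsColoring G C) (hv : ({v} : Finset V) ∈ C) (hI : I ∈ C)
    (h2 : 2 ≤ I.card) (hw : G.neighborFinset v ∩ I = {w}) :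
    ∃ C' : Finset (Finset V), IsColoring G C' ∧ C'.card = C.card ∧
      (C.filter fun K => K.card = 1).card ≤ (C'.filter fun K => K.card = 1).card ∧
      ({w} : Finset V) ∈ C' ∧
      (∀ u : V, ({u} : Finset V) ∈ C → u ≠ v → ({u} : Finset V) ∈ C') ∧
      (∀ K ∈ C, K ≠ {v} → K ≠ I → K ∈ C') := by
  classical
  have hvIne : ({v} : Finset V) ≠ I := by
    intro h; rw [← h] at h2; simp at h2
  have hvnotI : v ∉ I := by
    intro hvI
    exact Finset.disjoint_left.mp (class_disj hC hv hI hvIne) (Finset.mem_singleton_self v) hvI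
  have hwI : w ∈ I := by
    have : w ∈ G.neighborFinset v ∩ I := by rw [hw]; exact Finset.mem_singleton_self w
    exact (Finset.mem_inter.mp this).2
  have hadj : G.Adj v w := by
    have : w ∈ G.neighborFinset v ∩ I := by rw [hw]; exact Finset.mem_singleton_self w
    exact (SimpleGraph.mem_neighborFinset _ _ _).mp (Finset.mem_inter.mp this).1
  have hwv : w ≠ v := fun h => hvnotI (h ▸ hwI)
  have hadjiff : ∀ x ∈ I, (G.Adj v x ↔ x = w) := by
    intro x hxI
    constructor
    · intro hax
      have : x ∈ G.neighborFinset v ∩ I :=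
        Finset.mem_inter.mpr ⟨(SimpleGraph.mem_neighborFinset _ _ _).mpr hax, hxI⟩
      rw [hw] at this; exact Finset.mem_singleton.mp this
    · rintro rfl; exact hadj
  set I' : Finset V := insert v (I.erase w) with hI'def
  have hvI' : v ∈ I' := Finset.mem_insert_self _ _
  have hI'card : I'.card = I.card := by
    rw [hI'def, Finset.card_insert_of_notMem (fun h => hvnotI (Finset.mem_of_mem_erase h)),
      Finset.card_erase_of_mem hwI]
    omega
  have hI'2 : 2 ≤ I'.card := hI'card ▸ h2
  have hI'sub : I' ⊆ insert v I := by
    rw [hI'def]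
    exact Finset.insert_subset_insert _ (Finset.erase_subset _ _)
  set C' := insert {w} (insert I' ((C.erase {v}).erase I)) with hC'def
  have hmem : ∀ K, K ∈ C' ↔ K = {w} ∨ K = I' ∨ (K ∈ C ∧ K ≠ I ∧ K ≠ {v}) := by
    intro K
    simp only [hC'def, Finset.mem_insert, Finset.mem_erase]
    tauto
  -- old classes (≠ {v}, ≠ I) don't contain v nor w
  have hold : ∀ K ∈ C, K ≠ {v} → K ≠ I → v ∉ K ∧ w ∉ K := by
    intro K hK h1 h3
    constructor
    · intro hvK
      exact Finset.disjoint_left.mp (class_disj hC hv hK (Ne.symm h1))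
        (Finset.mem_singleton_self v) hvK
    · intro hwK
      exact Finset.disjoint_left.mp (class_disj hC hI hK (Ne.symm h3)) hwI hwK
  have hwnotI' : w ∉ I' := by
    rw [hI'def, Finset.mem_insert]
    rintro (h | h)
    · exact hwv h
    · exact (Finset.mem_erase.mp h).1 rfl
  have hcol : IsColoring G C' := by
    refine isColoring_mk ?_ ?_ ?_ ?_
    · intro K hK
      rcases (hmem K).mp hK with rfl | rfl | ⟨hK, -, -⟩
      · exact ⟨w, Finset.mem_singleton_self w⟩
      · exact ⟨v, hvI'⟩
      · exact hC.1 K hK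
    · intro x
      obtain ⟨K, hK, hxK⟩ := class_exists hC x
      by_cases hK1 : K = {v}
      · subst hK1
        rw [Finset.mem_singleton] at hxK
        exact ⟨I', (hmem _).mpr (Or.inr (Or.inl rfl)), hxK ▸ hvI'⟩
      by_cases hK2 : K = I
      · subst hK2
        by_cases hxw : x = w
        · exact ⟨{w}, (hmem _).mpr (Or.inl rfl), by simp [hxw]⟩
        · refine ⟨I', (hmem _).mpr (Or.inr (Or.inl rfl)), ?_⟩
          rw [hI'def]
          exact Finset.mem_insert_of_mem (Finset.mem_erase.mpr ⟨hxw, hxK⟩)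
      · exact ⟨K, (hmem _).mpr (Or.inr (Or.inr ⟨hK, hK2, hK1⟩)), hxK⟩
    · have hd1 : Disjoint ({w} : Finset V) I' := by
        simp [Finset.disjoint_singleton_left, hwnotI']
      have hd2 : ∀ K ∈ C, K ≠ {v} → K ≠ I → Disjoint ({w} : Finset V) K := by
        intro K hK h1 h3
        simp [Finset.disjoint_singleton_left, (hold K hK h1 h3).2]
      have hd3 : ∀ K ∈ C, K ≠ {v} → K ≠ I → Disjoint I' K := by
        intro K hK h1 h3
        have := class_disj hC hI hK (Ne.symm h3)
        refine Finset.disjoint_left.mpr ?_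
        intro a haI' haK
        rcases Finset.mem_insert.mp (hI'def ▸ haI') with rfl | ha
        · exact (hold K hK h1 h3).1 haK
        · exact Finset.disjoint_left.mp this (Finset.mem_of_mem_erase ha) haK
      intro K hK L hL hne
      rcases (hmem K).mp hK with rfl | rfl | ⟨hK, hK2, hK1⟩ <;>
        rcases (hmem L).mp hL with rfl | rfl | ⟨hL, hL2, hL1⟩
      · exact absurd rfl hne
      · exact hd1
      · exact hd2 L hL hL1 hL2
      · exact hd1.symm
      · exact absurd rfl hne
      · exact hd3 L hL hL1 hL2
      · exact (hd2 K hK hK1 hK2).symm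
      · exact (hd3 K hK hK1 hK2).symm
      · exact class_disj hC hK hL hne
    · intro K hK
      rcases (hmem K).mp hK with rfl | rfl | ⟨hK, -, -⟩
      · intro x hx y hy
        rw [Finset.mem_singleton] at hx hy
        rw [hx, hy]; exact G.loopless.irrefl _
      · intro x hx y hy
        rcases Finset.mem_insert.mp (hI'def ▸ hx) with hx1 | hx1 <;>
          rcases Finset.mem_insert.mp (hI'def ▸ hy) with hy1 | hy1
        · rw [hx1, hy1]; exact G.loopless.irrefl _
        · rw [hx1]
          intro hc
          have := (hadjiff y (Finset.mem_of_mem_erase hy1)).mp hc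
          exact (Finset.mem_erase.mp hy1).1 this
        · rw [hy1]
          intro hc
          have := (hadjiff x (Finset.mem_of_mem_erase hx1)).mp hc.symm
          exact (Finset.mem_erase.mp hx1).1 this
        · exact hC.2.2 I hI x (Finset.mem_of_mem_erase hx1) y (Finset.mem_of_mem_erase hy1)
      · exact hC.2.2 K hK
  -- cardinality
  have hInotv : I ∈ C.erase {v} := Finset.mem_erase.mpr ⟨Ne.symm hvIne, hI⟩
  have hwnotin : ({w} : Finset V) ∉ insert I' ((C.erase {v}).erase I) := by
    rw [Finset.mem_insert]
    rintro (h | h)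
    · rw [← h] at hI'2; simp at hI'2
    · have h1 := Finset.mem_erase.mp h
      have h2 := Finset.mem_erase.mp h1.2
      have : w ∉ ({w} : Finset V) := (hold _ h2.2 h2.1 h1.1).2
      simp at this
    
  have hI'notin : I' ∉ (C.erase {v}).erase I := by
    intro h
    have h1 := Finset.mem_erase.mp h
    have h2 := Finset.mem_erase.mp h1.2
    exact (hold _ h2.2 h2.1 h1.1).1 hvI'
  have hcard : C'.card = C.card := by
    rw [hC'def, Finset.card_insert_of_notMem hwnotin, Finset.card_insert_of_notMem hI'notin,
      Finset.card_erase_of_mem hInotv, Finset.card_erase_of_mem hv]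
    have : 1 ≤ (C.erase {v}).card := Finset.card_pos.mpr ⟨I, hInotv⟩
    have h1 : 1 ≤ C.card := Finset.card_pos.mpr ⟨I, hI⟩
    have := Finset.card_erase_of_mem hv
    omega
  -- singleton counting
  have hsing : (C.filter fun K => K.card = 1).card ≤ (C'.filter fun K => K.card = 1).card := by
    apply Finset.card_le_card_of_injOn (fun K => if K = {v} then {w} else K)
    · intro K hK
      rw [Finset.mem_coe, Finset.mem_filter] at hK
      by_cases h : K = {v}
      · simp only [h, if_pos rfl]
        exact Finset.mem_filter.mpr ⟨(hmem _).mpr (Or.inl rfl), Finset.card_singleton w⟩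
      · simp only [if_neg h]
        have hKI : K ≠ I := by
          intro hKI; rw [hKI] at hK; omega
        exact Finset.mem_filter.mpr
          ⟨(hmem _).mpr (Or.inr (Or.inr ⟨hK.1, hKI, h⟩)), hK.2⟩
    · intro K hK L hL heq
      rw [Finset.mem_coe, Finset.mem_filter] at hK hL
      dsimp only at heq
      by_cases h1 : K = {v} <;> by_cases h2 : L = {v}
      · rw [h1, h2]
      · rw [if_pos h1, if_neg h2] at heq
        have hLI : L ≠ I := by intro h; rw [h] at hL; omega
        exact absurd (heq ▸ (hold L hL.1 h2 hLI).2) (by simp)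
      · rw [if_neg h1, if_pos h2] at heq
        have hKI : K ≠ I := by intro h; rw [h] at hK; omega
        exact absurd (heq ▸ (hold K hK.1 h1 hKI).2) (by simp [heq])
      · rwa [if_neg h1, if_neg h2] at heq
  refine ⟨C', hcol, hcard, hsing, (hmem _).mpr (Or.inl rfl), ?_, ?_⟩
  · intro u hu hune
    have hucard : ({u} : Finset V) ≠ I := by
      intro h
      have := h ▸ Finset.card_singleton u
      omega
    refine (hmem _).mpr (Or.inr (Or.inr ⟨hu, hucard, ?_⟩))
    simp [hune]
  · intro K hK h1 h3
    exact (hmem _).mpr (Or.inr (Or.inr ⟨hK, h3, h1⟩))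

end Swap
section Core

set_option linter.unusedSectionVars false
set_option maxHeartbeats 1000000

variable {G : SimpleGraph V} [DecidableRel G.Adj]

lemma core_aux (hfail : G.cliqueNum + G.maxDegree + 2 ≤ 2 * chi G) (j : ℕ)
    (hexit : ∀ D' : Finset (Finset V), IsColoring G D' → D'.card + 1 = chi G + j →
      2 * (D'.filter fun K => K.card = 1).card + 4 ≤ G.cliqueNum + 4 * j)
    (D : Finset (Finset V)) (hD : IsColoring G D) (hcard : D.card = chi G + j) :
    2 * (D.filter fun K => K.card = 1).card ≤ G.cliqueNum + 4 * j := by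
  classical
  by_contra hbig
  push_neg at hbig
  set S := (D.filter fun K => K.card = 1).card with hSdef
  have hbig' : G.cliqueNum + 4 * j + 1 ≤ 2 * S := hbig
  -- T1 : singletons in any (χ+j)-coloring with ≥ S singletons are pairwise adjacent
  have T1 : ∀ E : Finset (Finset V), IsColoring G E → E.card = chi G + j →
      S ≤ (E.filter fun K => K.card = 1).card →
      ∀ a b : V, ({a} : Finset V) ∈ E → ({b} : Finset V) ∈ E → a ≠ b → G.Adj a b := by
    intro E hE hcardE hSE a b ha hb hab
    by_contra hnadj
    have hne : ({a} : Finset V) ≠ ({b} : Finset V) := by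
      simp only [ne_eq, Finset.singleton_inj]; exact hab
    have hind : ∀ x ∈ ({a} : Finset V) ∪ {b}, ∀ y ∈ ({a} : Finset V) ∪ {b}, ¬ G.Adj x y := by
      intro x hx y hy
      simp only [Finset.mem_union, Finset.mem_singleton] at hx hy
      rcases hx with rfl | rfl <;> rcases hy with rfl | rfl
      · exact G.loopless.irrefl _
      · exact hnadj
      · exact fun h => hnadj h.symm
      · exact G.loopless.irrefl _
    obtain ⟨E', hE', hcardE', hkeep⟩ := merge_coloring hE ha hb hne hind
    have hsub : (E.filter fun K => K.card = 1) \ {({a} : Finset V), ({b} : Finset V)} ⊆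
        (E'.filter fun K => K.card = 1) := by
      intro K hK
      rw [Finset.mem_sdiff, Finset.mem_filter] at hK
      simp only [Finset.mem_insert, Finset.mem_singleton] at hK
      push_neg at hK
      exact Finset.mem_filter.mpr ⟨hkeep K hK.1.1 hK.2.1 hK.2.2, hK.1.2⟩
    have h1 := Finset.card_le_card hsub
    have h2 : (E.filter fun K => K.card = 1).card ≤
        ((E.filter fun K => K.card = 1) \ {({a} : Finset V), ({b} : Finset V)}).card + 2 := by
      have := Finset.card_le_card_sdiff_add_card
        (s := E.filter fun K => K.card = 1) (t := {({a} : Finset V), ({b} : Finset V)})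
      have hc2 : ({({a} : Finset V), ({b} : Finset V)} : Finset (Finset V)).card ≤ 2 :=
        Finset.card_insert_le _ _ |>.trans (by simp)
      omega
    have := hexit E' hE' (by omega)
    omega
  -- T2 : singleton vertices have a neighbor in every non-singleton class
  have T2 : ∀ E : Finset (Finset V), IsColoring G E → E.card = chi G + j →
      S ≤ (E.filter fun K => K.card = 1).card →
      ∀ v : V, ({v} : Finset V) ∈ E → ∀ I ∈ E, 2 ≤ I.card →
      ∃ x ∈ I, G.Adj v x := by
    intro E hE hcardE hSE v hv I hI h2
    by_contra hnadj
    push_neg at hnadj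
    obtain ⟨E', hE', hcardE', hkeep⟩ := move_coloring hE hv hI h2 hnadj
    have hsub : (E.filter fun K => K.card = 1) \ {({v} : Finset V)} ⊆
        (E'.filter fun K => K.card = 1) := by
      intro K hK
      rw [Finset.mem_sdiff, Finset.mem_filter, Finset.mem_singleton] at hK
      have hKI : K ≠ I := by
        intro h; rw [h] at hK; omega
      exact Finset.mem_filter.mpr ⟨hkeep K hK.1.1 hK.2 hKI, hK.1.2⟩
    have h1 := Finset.card_le_card hsub
    have h2' : (E.filter fun K => K.card = 1).card ≤
        ((E.filter fun K => K.card = 1) \ {({v} : Finset V)}).card + 1 := by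
      have := Finset.card_le_card_sdiff_add_card
        (s := E.filter fun K => K.card = 1) (t := {({v} : Finset V)})
      simp only [Finset.card_singleton] at this
      omega
    have := hexit E' hE' (by omega)
    omega
  -- the set of singleton vertices of D
  set Vs : Finset V := Finset.univ.filter (fun u => ({u} : Finset V) ∈ D) with hVsdef
  have hVsmem : ∀ u : V, u ∈ Vs ↔ ({u} : Finset V) ∈ D := by
    intro u; simp [hVsdef]
  have hVscard : Vs.card = S := by
    rw [hSdef]
    apply Finset.card_nbij (fun u => ({u} : Finset V))
    · intro u hu
      rw [Finset.mem_coe, hVsmem] at hu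
      exact Finset.mem_filter.mpr ⟨hu, Finset.card_singleton u⟩
    · intro a ha b hb hab
      simpa using hab
    · intro K hK
      rw [Finset.coe_filter] at hK
      obtain ⟨hKD, hK1⟩ := hK
      obtain ⟨u, rfl⟩ := Finset.card_eq_one.mp hK1
      exact ⟨u, by rw [Finset.mem_coe, hVsmem]; exact hKD, rfl⟩
  have hVsadj : ∀ a ∈ Vs, ∀ b ∈ Vs, a ≠ b → G.Adj a b := by
    intro a ha b hb hab
    exact T1 D hD hcard le_rfl a b ((hVsmem a).mp ha) ((hVsmem b).mp hb) hab
  have hVsclique : G.IsClique (Vs : Set V) := by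
    rw [SimpleGraph.isClique_iff]
    intro a ha b hb hab
    exact hVsadj a ha b hb hab
  have hSom : S ≤ G.cliqueNum := by
    rw [← hVscard]
    exact SimpleGraph.IsClique.card_le_cliqueNum (tc := hVsclique)
  set m : ℕ := G.cliqueNum + 1 + 2 * j - S with hmdef
  have hmS : m ≤ S := by omega
  have hm1 : 1 ≤ m := by omega
  have hmsum : m + S = G.cliqueNum + 1 + 2 * j := by omega
  -- T3 : lonely class count
  have T3 : ∀ v ∈ Vs, m ≤ (D.filter fun I =>
      2 ≤ I.card ∧ (G.neighborFinset v ∩ I).card = 1).card := by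
    intro v hv
    have hvD : ({v} : Finset V) ∈ D := (hVsmem v).mp hv
    have hdeg : G.degree v = ∑ I ∈ D, (G.neighborFinset v ∩ I).card := by
      rw [← SimpleGraph.card_neighborFinset_eq_degree]
      rw [← Finset.card_biUnion]
      · congr 1
        ext x
        simp only [Finset.mem_biUnion, Finset.mem_inter]
        constructor
        · intro hx
          obtain ⟨K, hK, hxK⟩ := class_exists hD x
          exact ⟨K, hK, hx, hxK⟩
        · rintro ⟨K, -, hx, -⟩; exact hx
      · intro I hI J hJ hne
        exact Finset.disjoint_of_subset_left Finset.inter_subset_right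
          (Finset.disjoint_of_subset_right Finset.inter_subset_right
            (class_disj hD hI hJ hne) )
    have hpt : ∀ I ∈ D,
        (if I = ({v} : Finset V) then 0 else 1) +
        (if 2 ≤ I.card ∧ ¬((G.neighborFinset v ∩ I).card = 1) then 1 else 0) ≤
        (G.neighborFinset v ∩ I).card := by
      intro I hI
      by_cases h1 : I = ({v} : Finset V)
      · subst h1
        have : ¬(2 ≤ ({v} : Finset V).card ∧
            ¬((G.neighborFinset v ∩ {v}).card = 1)) := by
          simp
        rw [if_pos rfl, if_neg this]
        exact Nat.zero_le _
      · rw [if_neg h1]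
        have hIne := hD.1 I hI
        rcases Nat.lt_or_ge I.card 2 with hc | hc
        · -- singleton class ≠ {v}
          have hc1 : I.card = 1 := by
            have := Finset.card_pos.mpr hIne
            omega
          obtain ⟨u, rfl⟩ := Finset.card_eq_one.mp hc1
          have huv : u ≠ v := by
            intro h; exact h1 (by rw [h])
          have hadj : G.Adj v u := T1 D hD hcard le_rfl v u hvD hI (Ne.symm huv)
          have : 1 ≤ (G.neighborFinset v ∩ {u}).card := by
            apply Finset.card_pos.mpr
            exact ⟨u, Finset.mem_inter.mpr
              ⟨(SimpleGraph.mem_neighborFinset _ _ _).mpr hadj, Finset.mem_singleton_self u⟩⟩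
          have hnot : ¬(2 ≤ ({u} : Finset V).card ∧
              ¬((G.neighborFinset v ∩ {u}).card = 1)) := by
            simp
          rw [if_neg hnot]
          omega
        · by_cases h3 : (G.neighborFinset v ∩ I).card = 1
          · rw [if_neg (by simp [h3])]
            omega
          · rw [if_pos ⟨hc, h3⟩]
            obtain ⟨x, hxI, hadj⟩ := T2 D hD hcard le_rfl v hvD I hI hc
            have : 1 ≤ (G.neighborFinset v ∩ I).card := by
              apply Finset.card_pos.mpr
              exact ⟨x, Finset.mem_inter.mpr
                ⟨(SimpleGraph.mem_neighborFinset _ _ _).mpr hadj, hxI⟩⟩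
            omega
    have hsum1 : ∑ I ∈ D, (if I = ({v} : Finset V) then 0 else 1) + 1 = D.card := by
      have : ∑ I ∈ D, (if I = ({v} : Finset V) then 0 else 1) =
          ∑ I ∈ D, (if ¬(I = ({v} : Finset V)) then 1 else 0) := by
        apply Finset.sum_congr rfl
        intro I _
        by_cases h : I = ({v} : Finset V) <;> simp [h]
      rw [this, Finset.sum_boole]
      have : D.filter (fun I => ¬(I = ({v} : Finset V))) = D.erase {v} := by
        ext K; simp [Finset.mem_erase, and_comm]
      rw [this, Finset.card_erase_of_mem hvD]
      have : 1 ≤ D.card := Finset.card_pos.mpr ⟨_, hvD⟩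
      push_cast
      omega
    have hsum2 : ∑ I ∈ D, (if 2 ≤ I.card ∧ ¬((G.neighborFinset v ∩ I).card = 1) then 1 else 0) =
        (D.filter fun I => 2 ≤ I.card ∧ ¬((G.neighborFinset v ∩ I).card = 1)).card := by
      rw [Finset.sum_boole]; simp
    have hsumle : ∑ I ∈ D, ((if I = ({v} : Finset V) then 0 else 1) +
        (if 2 ≤ I.card ∧ ¬((G.neighborFinset v ∩ I).card = 1) then 1 else 0)) ≤
        G.degree v := by
      rw [hdeg]
      exact Finset.sum_le_sum hpt
    rw [Finset.sum_add_distrib] at hsumle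
    -- cover : D splits into singletons, lonely classes, and the rest
    have hcover : D ⊆ (D.filter fun K => K.card = 1) ∪
        (D.filter fun I => 2 ≤ I.card ∧ (G.neighborFinset v ∩ I).card = 1) ∪
        (D.filter fun I => 2 ≤ I.card ∧ ¬((G.neighborFinset v ∩ I).card = 1)) := by
      intro I hI
      simp only [Finset.mem_union, Finset.mem_filter]
      have hIne := hD.1 I hI
      have := Finset.card_pos.mpr hIne
      rcases Nat.lt_or_ge I.card 2 with hc | hc
      · exact Or.inl (Or.inl ⟨hI, by omega⟩)
      · by_cases h3 : (G.neighborFinset v ∩ I).card = 1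
        · exact Or.inl (Or.inr ⟨hI, hc, h3⟩)
        · exact Or.inr ⟨hI, hc, h3⟩
    have hcover' : D.card ≤ S +
        (D.filter fun I => 2 ≤ I.card ∧ (G.neighborFinset v ∩ I).card = 1).card +
        (D.filter fun I => 2 ≤ I.card ∧ ¬((G.neighborFinset v ∩ I).card = 1)).card := by
      calc D.card ≤ _ := Finset.card_le_card hcover
        _ ≤ _ := Finset.card_union_le _ _
        _ ≤ _ := by
            have := Finset.card_union_le (D.filter fun K => K.card = 1)
              (D.filter fun I => 2 ≤ I.card ∧ (G.neighborFinset v ∩ I).card = 1)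
            omega
    have hmaxdeg := G.degree_le_maxDegree v
    rw [hsum2] at hsumle
    omega
  -- choose m singleton vertices and, by Hall, distinct lonely classes for them
  obtain ⟨P, hPsub, hPcard⟩ := Finset.exists_subset_card_eq (s := Vs) (n := m) (by omega)
  have hhall : ∀ s : Finset {x // x ∈ P},
      s.card ≤ (s.biUnion fun x => D.filter fun I =>
        2 ≤ I.card ∧ (G.neighborFinset x.1 ∩ I).card = 1).card := by
    intro s
    rcases s.eq_empty_or_nonempty with rfl | ⟨x₀, hx₀⟩
    · simp
    · have h1 : s.card ≤ m := by
        have := Finset.card_le_univ s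
        rwa [Fintype.card_coe, hPcard] at this
      have h2 : m ≤ (D.filter fun I =>
          2 ≤ I.card ∧ (G.neighborFinset x₀.1 ∩ I).card = 1).card :=
        T3 x₀.1 (hPsub x₀.2)
      have h3 := Finset.card_le_card (Finset.subset_biUnion_of_mem
        (fun x : {x // x ∈ P} => D.filter fun I =>
          2 ≤ I.card ∧ (G.neighborFinset x.1 ∩ I).card = 1) hx₀)
      omega
  obtain ⟨f, hfinj, hf⟩ := (Finset.all_card_le_biUnion_card_iff_exists_injective _).mp hhall
  have hfprop : ∀ x : {x // x ∈ P}, f x ∈ D ∧ 2 ≤ (f x).card ∧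
      (G.neighborFinset x.1 ∩ f x).card = 1 := by
    intro x
    have := hf x
    rw [Finset.mem_filter] at this
    exact ⟨this.1, this.2.1, this.2.2⟩
  have hwex : ∀ x : {x // x ∈ P}, ∃ w : V, G.neighborFinset x.1 ∩ f x = {w} :=
    fun x => Finset.card_eq_one.mp (hfprop x).2.2
  choose wf hwf using hwex
  have hwmem : ∀ x, wf x ∈ f x := by
    intro x
    have : wf x ∈ G.neighborFinset x.1 ∩ f x := by
      rw [hwf x]; exact Finset.mem_singleton_self _
    exact (Finset.mem_inter.mp this).2
  have hwadj : ∀ x : {x // x ∈ P}, G.Adj x.1 (wf x) := by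
    intro x
    have : wf x ∈ G.neighborFinset x.1 ∩ f x := by
      rw [hwf x]; exact Finset.mem_singleton_self _
    exact (SimpleGraph.mem_neighborFinset _ _ _).mp (Finset.mem_inter.mp this).1
  have hPVs : ∀ x : {x // x ∈ P}, x.1 ∈ Vs := fun x => hPsub x.2
  have hwnotVs : ∀ x : {x // x ∈ P}, wf x ∉ Vs := by
    intro x hmem
    have hwD : ({wf x} : Finset V) ∈ D := (hVsmem _).mp hmem
    have hne : ({wf x} : Finset V) ≠ f x := by
      intro h
      have := (hfprop x).2.1
      rw [← h] at this; simp at this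
    exact Finset.disjoint_left.mp (class_disj hD hwD (hfprop x).1 hne)
      (Finset.mem_singleton_self _) (hwmem x)
  have hwinj : Function.Injective wf := by
    intro x y hxy
    by_contra hne
    have hfne : f x ≠ f y := fun h => hne (hfinj h)
    exact Finset.disjoint_left.mp (class_disj hD (hfprop x).1 (hfprop y).1 hfne)
      (hwmem x) (hxy ▸ hwmem y)
  -- the adjacency facts via swaps
  have hswap1 : ∀ x : {x // x ∈ P}, ∀ a ∈ Vs, a ≠ x.1 → G.Adj a (wf x) := by
    intro x a ha hax
    obtain ⟨E', hE', hcardE', hSgE', hwE', hkeepS, hkeepC⟩ :=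
      swap_coloring hD ((hVsmem _).mp (hPVs x)) (hfprop x).1 (hfprop x).2.1 (hwf x)
    have hax2 : a ≠ wf x := by
      intro h; exact hwnotVs x (h ▸ ha)
    exact T1 E' hE' (by omega) (by omega) a (wf x)
      (hkeepS a ((hVsmem _).mp ha) hax) hwE' hax2
  have hswap2 : ∀ x y : {x // x ∈ P}, x ≠ y → G.Adj (wf x) (wf y) := by
    intro x y hxy
    have hxy1 : x.1 ≠ y.1 := fun h => hxy (Subtype.ext h)
    obtain ⟨E', hE', hcardE', hSgE', hwE', hkeepS, hkeepC⟩ :=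
      swap_coloring hD ((hVsmem _).mp (hPVs x)) (hfprop x).1 (hfprop x).2.1 (hwf x)
    have hyE' : ({y.1} : Finset V) ∈ E' := hkeepS y.1 ((hVsmem _).mp (hPVs y)) hxy1.symm
    have hfyE' : f y ∈ E' := by
      apply hkeepC (f y) (hfprop y).1
      · intro h
        have := (hfprop y).2.1
        rw [h] at this; simp at this
      · exact fun h => hxy (hfinj h).symm
    obtain ⟨E'', hE'', hcardE'', hSgE'', hwE'', hkeepS', hkeepC'⟩ :=
      swap_coloring hE' hyE' hfyE' (hfprop y).2.1 (hwf y)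
    have hwxE'' : ({wf x} : Finset V) ∈ E'' := by
      apply hkeepC' _ hwE'
      · intro h
        rw [Finset.singleton_inj] at h
        exact hwnotVs x (h ▸ hPVs y)
      · intro h
        have := (hfprop y).2.1
        rw [← h] at this; simp at this
    have hwne : wf x ≠ wf y := fun h => hxy (hwinj h)
    exact T1 E'' hE'' (by omega) (by omega) (wf x) (wf y) hwxE'' hwE'' hwne
  -- build the clique
  set W : Finset V := Finset.univ.image wf with hWdef
  have hWcard : W.card = m := by
    rw [hWdef, Finset.card_image_of_injective _ hwinj, Finset.card_univ,
      Fintype.card_coe, hPcard]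
  have hWmem : ∀ u : V, u ∈ W ↔ ∃ x : {x // x ∈ P}, wf x = u := by
    intro u; simp [hWdef]
  have hdisj : Disjoint Vs W := by
    rw [Finset.disjoint_right]
    intro u hu
    obtain ⟨x, rfl⟩ := (hWmem u).mp hu
    exact hwnotVs x
  have hKcard : (Vs ∪ W).card = S + m := by
    rw [Finset.card_union_of_disjoint hdisj, hVscard, hWcard]
  have hKclique : G.IsClique ((Vs ∪ W : Finset V) : Set V) := by
    rw [SimpleGraph.isClique_iff]
    intro a ha b hb hab
    rw [Finset.mem_coe, Finset.mem_union] at ha hb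
    rcases ha with ha | ha <;> rcases hb with hb | hb
    · exact hVsadj a ha b hb hab
    · obtain ⟨x, rfl⟩ := (hWmem b).mp hb
      by_cases hax : a = x.1
      · subst hax; exact hwadj x
      · exact hswap1 x a ha hax
    · obtain ⟨x, rfl⟩ := (hWmem a).mp ha
      by_cases hbx : b = x.1
      · subst hbx; exact (hwadj x).symm
      · exact (hswap1 x b hb hbx).symm
    · obtain ⟨x, rfl⟩ := (hWmem a).mp ha
      obtain ⟨y, rfl⟩ := (hWmem b).mp hb
      have hxy : x ≠ y := fun h => hab (by rw [h])
      exact hswap2 x y hxy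
  have := SimpleGraph.IsClique.card_le_cliqueNum (tc := hKclique)
  omega

lemma core (hfail : G.cliqueNum + G.maxDegree + 2 ≤ 2 * chi G) :
    ∀ (j : ℕ) (D : Finset (Finset V)), IsColoring G D → D.card = chi G + j →
      2 * (D.filter fun K => K.card = 1).card ≤ G.cliqueNum + 4 * j := by
  intro j
  induction j with
  | zero =>
    apply core_aux hfail 0
    intro D' hD' hc
    have := chi_le hD'
    omega
  | succ n ih =>
    apply core_aux hfail (n + 1)
    intro D' hD' hc
    have := ih D' hD' (by omega)
    omega

end Core
set_option maxHeartbeats 1600000 in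
theorem statement_7 (G : SimpleGraph V) [DecidableRel G.Adj] :
    (chi G : ℝ) ≤ ((G.cliqueNum : ℝ) + G.maxDegree + 1) / 2 ∨
    (chi G : ℝ) ≤ ((G.cliqueNum : ℝ) / 2 + Fintype.card V - indepNum G) / 2 + 1 := by
  classical
  by_cases hb1 : 2 * chi G ≤ G.cliqueNum + G.maxDegree + 1
  · left
    have : (2 * chi G : ℝ) ≤ (G.cliqueNum : ℝ) + G.maxDegree + 1 := by
      exact_mod_cast Nat.cast_le.mpr hb1
    linarith
  · right
    have hfail : G.cliqueNum + G.maxDegree + 2 ≤ 2 * chi G := by omega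
    -- a maximum independent set
    have hαmem : indepNum G ∈ {n | ∃ s : Finset V,
        (∀ v ∈ s, ∀ w ∈ s, ¬ G.Adj v w) ∧ s.card = n} := by
      apply Nat.sSup_mem
      · exact ⟨0, ∅, by simp, rfl⟩
      · refine ⟨Fintype.card V, ?_⟩
        rintro y ⟨s, -, rfl⟩
        exact Finset.card_le_univ s
    obtain ⟨A, hAind, hAcard⟩ := hαmem
    obtain ⟨C, hC, hCcard⟩ := exists_optimal G
    set F : Finset (Finset V) := C.filter (fun I => (I \ A).card = 0) with hFdef
    set H1n : Finset (Finset V) := C.filter (fun I => (I \ A).card = 1 ∧ 2 ≤ I.card) with hH1ndef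
    set H1 : Finset (Finset V) := C.filter (fun I => (I \ A).card = 1) with hH1def
    have hH1nsub : H1n ⊆ H1 := by
      intro J hJ
      rw [hH1ndef, Finset.mem_filter] at hJ
      rw [hH1def, Finset.mem_filter]
      exact ⟨hJ.1, hJ.2.1⟩
    have hH1sub : H1 ⊆ C := Finset.filter_subset _ _
    have hinjH1 : Set.InjOn (fun J => J \ A) H1 := by
      intro J hJ J' hJ' heq
      by_contra hne
      rw [Finset.mem_coe] at hJ hJ'
      have hd := class_disj hC (hH1sub hJ) (hH1sub hJ') hne
      have h1 : (J \ A).card = 1 := (Finset.mem_filter.mp hJ).2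
      obtain ⟨x, hx⟩ := Finset.card_pos.mp (by omega : 0 < (J \ A).card)
      have hx' : x ∈ J' \ A := by
        have : (fun J => J \ A) J = (fun J => J \ A) J' := heq
        simpa [← this] using hx
      exact Finset.disjoint_left.mp hd (Finset.mem_sdiff.mp hx).1
        (Finset.mem_sdiff.mp hx').1
    -- F has at most one element
    have hF1 : F.card ≤ 1 := by
      by_contra hF2
      push_neg at hF2
      obtain ⟨I, hIF, J, hJF, hIJ⟩ := Finset.one_lt_card.mp hF2
      rw [hFdef, Finset.mem_filter] at hIF hJF
      have hIA : I ⊆ A := by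
        rw [← Finset.sdiff_eq_empty_iff_subset]
        exact Finset.card_eq_zero.mp hIF.2
      have hJA : J ⊆ A := by
        rw [← Finset.sdiff_eq_empty_iff_subset]
        exact Finset.card_eq_zero.mp hJF.2
      have hind : ∀ x ∈ I ∪ J, ∀ y ∈ I ∪ J, ¬ G.Adj x y := by
        intro x hx y hy
        have hx' : x ∈ A := by
          rcases Finset.mem_union.mp hx with h | h
          exacts [hIA h, hJA h]
        have hy' : y ∈ A := by
          rcases Finset.mem_union.mp hy with h | h
          exacts [hIA h, hJA h]
        exact hAind x hx' y hy'
      obtain ⟨C₂, hC₂, hC₂card, -⟩ := merge_coloring hC hIF.1 hJF.1 hIJ hind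
      have := chi_le hC₂
      omega
    -- key bound : 4 |F| + 2 |H1| ≤ ω + 4
    have hkey : 4 * F.card + 2 * H1.card ≤ G.cliqueNum + 4 := by
      by_cases hR : (F ∪ H1n).Nonempty
      · -- dissolve the A-heavy classes
        set R : Finset (Finset V) := F ∪ H1n with hRdef
        have hRsub : R ⊆ C := by
          intro J hJ
          rcases Finset.mem_union.mp hJ with h | h
          exacts [(Finset.mem_filter.mp h).1, (Finset.mem_filter.mp h).1]
        have hFH1n : Disjoint F H1n := by
          rw [Finset.disjoint_left]
          intro J h1 h2
          rw [hFdef, Finset.mem_filter] at h1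
          rw [hH1ndef, Finset.mem_filter] at h2
          omega
        have hRcard : R.card = F.card + H1n.card := Finset.card_union_of_disjoint hFH1n
        set B : Finset V := R.biUnion (fun J => J ∩ A) with hBdef
        have hBA : B ⊆ A := by
          intro x hx
          rw [hBdef, Finset.mem_biUnion] at hx
          obtain ⟨J, -, hxJ⟩ := hx
          exact (Finset.mem_inter.mp hxJ).2
        have hBmem : ∀ x, x ∈ B ↔ ∃ J ∈ R, x ∈ J ∧ x ∈ A := by
          intro x
          rw [hBdef, Finset.mem_biUnion]
          constructor
          · rintro ⟨J, hJ, hx⟩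
            exact ⟨J, hJ, (Finset.mem_inter.mp hx).1, (Finset.mem_inter.mp hx).2⟩
          · rintro ⟨J, hJ, h1, h2⟩
            exact ⟨J, hJ, Finset.mem_inter.mpr ⟨h1, h2⟩⟩
        have hBne : B.Nonempty := by
          obtain ⟨J, hJ⟩ := hR
          rcases Finset.mem_union.mp hJ with h | h
          · rw [hFdef, Finset.mem_filter] at h
            obtain ⟨x, hx⟩ := hC.1 J h.1
            have hxA : x ∈ A := by
              have hsub : J ⊆ A := by
                rw [← Finset.sdiff_eq_empty_iff_subset]
                exact Finset.card_eq_zero.mp h.2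
              exact hsub hx
            exact ⟨x, (hBmem x).mpr ⟨J, hJ, hx, hxA⟩⟩
          · rw [hH1ndef, Finset.mem_filter] at h
            have hsum : (J \ A).card + (J ∩ A).card = J.card :=
              Finset.card_sdiff_add_card_inter J A
            obtain ⟨x, hx⟩ := Finset.card_pos.mp (by omega : 0 < (J ∩ A).card)
            exact ⟨x, (hBmem x).mpr ⟨J, hJ, (Finset.mem_inter.mp hx).1,
              (Finset.mem_inter.mp hx).2⟩⟩
        set Cn : Finset (Finset V) := (C \ R) ∪ H1n.image (fun J => J \ A) with hCndef
        set C' : Finset (Finset V) := insert B Cn with hC'def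
        have hH1ncard1 : ∀ J ∈ H1n, (J \ A).card = 1 := by
          intro J hJ
          exact (Finset.mem_filter.mp hJ).2.1
        have hmemCn : ∀ K, K ∈ Cn ↔ (K ∈ C ∧ K ∉ R) ∨ (∃ J ∈ H1n, J \ A = K) := by
          intro K
          rw [hCndef, Finset.mem_union, Finset.mem_sdiff, Finset.mem_image]
        have hmemC' : ∀ K, K ∈ C' ↔ K = B ∨ ((K ∈ C ∧ K ∉ R) ∨ (∃ J ∈ H1n, J \ A = K)) := by
          intro K
          rw [hC'def, Finset.mem_insert, hmemCn]
        -- disjointness helpers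
        have hd_B_old : ∀ K ∈ C, K ∉ R → Disjoint B K := by
          intro K hK hKR
          rw [Finset.disjoint_left]
          intro x hxB hxK
          obtain ⟨J, hJR, hxJ, -⟩ := (hBmem x).mp hxB
          have hne : K ≠ J := fun h => hKR (h ▸ hJR)
          exact Finset.disjoint_left.mp (class_disj hC hK (hRsub hJR) hne) hxK hxJ
        have hd_B_img : ∀ J ∈ H1n, Disjoint B (J \ A) := by
          intro J hJ
          rw [Finset.disjoint_left]
          intro x hxB hxJ
          exact (Finset.mem_sdiff.mp hxJ).2 (hBA hxB)
        have hd_old_img : ∀ K ∈ C, K ∉ R → ∀ J ∈ H1n, Disjoint K (J \ A) := by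
          intro K hK hKR J hJ
          have hne : K ≠ J := fun h => hKR (h ▸ Finset.mem_union_right F hJ)
          exact Finset.disjoint_of_subset_right Finset.sdiff_subset
            (class_disj hC hK (hRsub (Finset.mem_union_right F hJ)) hne)
        have hd_img_img : ∀ J ∈ H1n, ∀ J' ∈ H1n, J \ A ≠ J' \ A →
            Disjoint (J \ A) (J' \ A) := by
          intro J hJ J' hJ' hne
          have hJJ' : J ≠ J' := fun h => hne (h ▸ rfl)
          exact Finset.disjoint_of_subset_left Finset.sdiff_subset
            (Finset.disjoint_of_subset_right Finset.sdiff_subset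
              (class_disj hC (hRsub (Finset.mem_union_right F hJ))
                (hRsub (Finset.mem_union_right F hJ')) hJJ'))
        -- C' is a coloring
        have hC'col : IsColoring G C' := by
          refine isColoring_mk ?_ ?_ ?_ ?_
          · intro K hK
            rcases (hmemC' K).mp hK with rfl | ⟨h1, -⟩ | ⟨J, hJ, rfl⟩
            · exact hBne
            · exact hC.1 K h1
            · exact Finset.card_pos.mp (by rw [hH1ncard1 J hJ]; omega)
          · intro x
            obtain ⟨K, hK, hxK⟩ := class_exists hC x
            by_cases hKR : K ∈ R
            · by_cases hxA : x ∈ A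
              · exact ⟨B, (hmemC' B).mpr (Or.inl rfl), (hBmem x).mpr ⟨K, hKR, hxK, hxA⟩⟩
              · have hKH1n : K ∈ H1n := by
                  rcases Finset.mem_union.mp hKR with h | h
                  · rw [hFdef, Finset.mem_filter] at h
                    have hsub : K ⊆ A := by
                      rw [← Finset.sdiff_eq_empty_iff_subset]
                      exact Finset.card_eq_zero.mp h.2
                    exact absurd (hsub hxK) hxA
                  · exact h
                exact ⟨K \ A, (hmemC' _).mpr (Or.inr (Or.inr ⟨K, hKH1n, rfl⟩)),
                  Finset.mem_sdiff.mpr ⟨hxK, hxA⟩⟩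
            · exact ⟨K, (hmemC' K).mpr (Or.inr (Or.inl ⟨hK, hKR⟩)), hxK⟩
          · intro K hK L hL hne
            rcases (hmemC' K).mp hK with rfl | ⟨hK1, hK2⟩ | ⟨J, hJ, rfl⟩ <;>
              rcases (hmemC' L).mp hL with rfl | ⟨hL1, hL2⟩ | ⟨J', hJ', rfl⟩
            · exact absurd rfl hne
            · exact hd_B_old L hL1 hL2
            · exact hd_B_img J' hJ'
            · exact (hd_B_old K hK1 hK2).symm
            · exact class_disj hC hK1 hL1 hne
            · exact hd_old_img K hK1 hK2 J' hJ'
            · exact (hd_B_img J hJ).symm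
            · exact (hd_old_img L hL1 hL2 J hJ).symm
            · exact hd_img_img J hJ J' hJ' hne
          · intro K hK
            rcases (hmemC' K).mp hK with rfl | ⟨hK1, -⟩ | ⟨J, hJ, rfl⟩
            · intro x hx y hy
              exact hAind x (hBA hx) y (hBA hy)
            · exact hC.2.2 K hK1
            · intro x hx y hy
              exact hC.2.2 J (hRsub (Finset.mem_union_right F hJ)) x
                (Finset.mem_sdiff.mp hx).1 y (Finset.mem_sdiff.mp hy).1
        -- cardinality of C'
        have hBnotCn : B ∉ Cn := by
          intro h
          rcases (hmemCn B).mp h with ⟨h1, h2⟩ | ⟨J, hJ, heq⟩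
          · have hBF : B ∈ F := by
              rw [hFdef, Finset.mem_filter]
              refine ⟨h1, Finset.card_eq_zero.mpr ?_⟩
              rw [Finset.sdiff_eq_empty_iff_subset]
              exact hBA
            exact h2 (Finset.mem_union_left H1n hBF)
          · obtain ⟨x, hx⟩ := hBne
            have hx2 : x ∈ J \ A := heq ▸ hx
            exact (Finset.mem_sdiff.mp hx2).2 (hBA hx)
        have hdisjCn : Disjoint (C \ R) (H1n.image (fun J => J \ A)) := by
          rw [Finset.disjoint_left]
          intro K hK hK2
          rw [Finset.mem_image] at hK2
          obtain ⟨J, hJ, heq⟩ := hK2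
          rw [Finset.mem_sdiff] at hK
          have hne : K ≠ J := fun h => hK.2 (h ▸ Finset.mem_union_right F hJ)
          have hd := class_disj hC hK.1 (hRsub (Finset.mem_union_right F hJ)) hne
          have hKcard : K.card = 1 := heq ▸ hH1ncard1 J hJ
          obtain ⟨x, hx⟩ := Finset.card_pos.mp (by omega : 0 < K.card)
          have hxJ : x ∈ J := by
            have : x ∈ J \ A := heq ▸ hx
            exact (Finset.mem_sdiff.mp this).1
          exact Finset.disjoint_left.mp hd hx hxJ
        have hCncard : Cn.card + R.card = C.card + H1n.card := by
          rw [hCndef, Finset.card_union_of_disjoint hdisjCn,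
            Finset.card_image_of_injOn (hinjH1.mono (by exact_mod_cast hH1nsub)),
            Finset.card_sdiff_of_subset hRsub]
          have := Finset.card_le_card hRsub
          omega
        have hC'card : C'.card = Cn.card + 1 := by
          rw [hC'def, Finset.card_insert_of_notMem hBnotCn]
        -- singleton classes of C' include all the J \ A for J ∈ H1
        have hsingle : H1.card ≤ (C'.filter fun K => K.card = 1).card := by
          apply Finset.card_le_card_of_injOn (fun J => J \ A)
          · intro J hJ
            rw [Finset.mem_coe, Finset.mem_filter]
            have hJ1 : (J \ A).card = 1 := (Finset.mem_filter.mp hJ).2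
            refine ⟨?_, hJ1⟩
            by_cases h2 : 2 ≤ J.card
            · have hJH1n : J ∈ H1n := by
                rw [hH1ndef, Finset.mem_filter]
                exact ⟨(Finset.mem_filter.mp hJ).1, hJ1, h2⟩
              exact (hmemC' _).mpr (Or.inr (Or.inr ⟨J, hJH1n, rfl⟩))
            · have hJC : J ∈ C := (Finset.mem_filter.mp hJ).1
              have hJne := hC.1 J hJC
              have hJcard : J.card = 1 := by
                have := Finset.card_pos.mpr hJne
                omega
              have heq : J \ A = J := by
                apply Finset.eq_of_subset_of_card_le Finset.sdiff_subset
                omega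
              show J \ A ∈ C'
              rw [heq]
              have hJR : J ∉ R := by
                intro h
                rcases Finset.mem_union.mp h with h | h
                · rw [hFdef, Finset.mem_filter] at h
                  omega
                · rw [hH1ndef, Finset.mem_filter] at h
                  omega
              exact (hmemC' J).mpr (Or.inr (Or.inl ⟨hJC, hJR⟩))
          · exact hinjH1
        -- apply the core lemma with j = 1 - |F|
        have hC'cardeq : C'.card = chi G + (1 - F.card) := by
          have := Finset.card_le_card hRsub
          omega
        have hcore := core hfail (1 - F.card) C' hC'col hC'cardeq
        omega
      · -- no A-heavy classes at all
        rw [Finset.not_nonempty_iff_eq_empty] at hR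
        obtain ⟨hFe, hH1ne⟩ := Finset.union_eq_empty.mp hR
        have hH1sing : H1 ⊆ C.filter (fun K => K.card = 1) := by
          intro J hJ
          rw [hH1def, Finset.mem_filter] at hJ
          rw [Finset.mem_filter]
          refine ⟨hJ.1, ?_⟩
          by_contra hne
          have h2 : 2 ≤ J.card := by
            have := Finset.card_pos.mpr (hC.1 J hJ.1)
            omega
          have : J ∈ H1n := by
            rw [hH1ndef, Finset.mem_filter]
            exact ⟨hJ.1, hJ.2, h2⟩
          rw [hH1ne] at this
          exact absurd this (Finset.notMem_empty J)
        have hcore := core hfail 0 C hC (by omega)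
        have := Finset.card_le_card hH1sing
        rw [hFe]
        simp only [Finset.card_empty]
        omega
    -- now the counting with respect to A
    have hbi : Finset.univ \ A = C.biUnion (fun I => I \ A) := by
      ext x
      simp only [Finset.mem_sdiff, Finset.mem_univ, true_and, Finset.mem_biUnion]
      constructor
      · intro hx
        obtain ⟨K, hK, hxK⟩ := class_exists hC x
        exact ⟨K, hK, hxK, hx⟩
      · rintro ⟨K, -, -, hxA⟩
        exact hxA
    have hsum : ∑ I ∈ C, (I \ A).card = (Finset.univ \ A).card := by
      rw [hbi]
      rw [Finset.card_biUnion]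
      intro I hI J hJ hne
      exact Finset.disjoint_of_subset_left Finset.sdiff_subset
        (Finset.disjoint_of_subset_right Finset.sdiff_subset (class_disj hC hI hJ hne))
    have hαn : A.card ≤ Fintype.card V := Finset.card_le_univ A
    have huA : (Finset.univ \ A).card + A.card = Fintype.card V := by
      rw [Finset.card_sdiff_add_card_eq_card (Finset.subset_univ A), Finset.card_univ]
    have hpt2 : ∀ I ∈ C, (if (I \ A).card = 1 then 1 else 0) +
        2 * (if 2 ≤ (I \ A).card then 1 else 0) ≤ (I \ A).card := by
      intro I hI
      by_cases h1 : (I \ A).card = 1 <;> by_cases h2 : 2 ≤ (I \ A).card <;>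
        simp [h1, h2] <;> omega
    have hSsumle : H1.card + 2 * (C.filter fun I => 2 ≤ (I \ A).card).card ≤
        ∑ I ∈ C, (I \ A).card := by
      calc H1.card + 2 * (C.filter fun I => 2 ≤ (I \ A).card).card
          = ∑ I ∈ C, ((if (I \ A).card = 1 then 1 else 0) +
            2 * (if 2 ≤ (I \ A).card then 1 else 0)) := by
            rw [Finset.sum_add_distrib, ← Finset.mul_sum, Finset.sum_boole, Finset.sum_boole]
            simp [hH1def]
        _ ≤ ∑ I ∈ C, (I \ A).card := Finset.sum_le_sum hpt2
    have hcov : C.card ≤ F.card + H1.card + (C.filter fun I => 2 ≤ (I \ A).card).card := by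
      have hsub : C ⊆ F ∪ H1 ∪ (C.filter fun I => 2 ≤ (I \ A).card) := by
        intro I hI
        simp only [Finset.mem_union, hFdef, hH1def, Finset.mem_filter]
        rcases Nat.lt_or_ge (I \ A).card 2 with h | h
        · rcases Nat.lt_or_ge (I \ A).card 1 with h' | h'
          · exact Or.inl (Or.inl ⟨hI, by omega⟩)
          · exact Or.inl (Or.inr ⟨hI, by omega⟩)
        · exact Or.inr ⟨hI, h⟩
      calc C.card ≤ _ := Finset.card_le_card hsub
        _ ≤ (F ∪ H1).card + _ := Finset.card_union_le _ _
        _ ≤ _ := by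
            have := Finset.card_union_le F H1
            omega
    -- final arithmetic
    have hfinal : 4 * chi G + 2 * A.card ≤ G.cliqueNum + 2 * Fintype.card V + 4 := by
      have h1 : 2 * chi G ≤ 2 * F.card + H1.card + (H1.card +
          2 * (C.filter fun I => 2 ≤ (I \ A).card).card) := by omega
      omega
    have hfinal' : (4 * chi G : ℝ) + 2 * (indepNum G : ℝ) ≤
        (G.cliqueNum : ℝ) + 2 * (Fintype.card V : ℝ) + 4 := by
      rw [← hAcard]
      exact_mod_cast Nat.cast_le.mpr hfinal
    linarith
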